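/- The rational function T(x₁,x₂) = (x₂⁴ + x₁² + 2x₁ + 1)/(x₁x₂²) satisfies T((x₂⁴+1)/x₁, x₂) = T(x₁,x₂) and T(x₁, (x₁+1)/x₂) = T(x₁,x₂), as identities of rational functions in ℚ(x₁,x₂). -/

import Mathlib

open MvPolynomial

/-- The field of rational functions `ℚ(x₁, x₂)`. -/
noncomputable abbrev QF := FractionRing (MvPolynomial (Fin 2) ℚ)

noncomputable def x₁ : QF := algebraMap (MvPolynomial (Fin 2) ℚ) QF (X 0)
noncomputable def x₂ : QF := algebraMap (MvPolynomial (Fin 2) ℚ) QF (X 1)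

/-- The mutation invariant of affine type `A₂⁽²⁾`. -/
noncomputable def T (a b : QF) : QF := (b ^ 4 + a ^ 2 + 2 * a + 1) / (a * b ^ 2)

/-- `T(x₁,x₂) = (x₂⁴+x₁²+2x₁+1)/(x₁x₂²)` is invariant under the mutations
`μ₁(x₁,x₂) = ((x₂⁴+1)/x₁, x₂)` and `μ₂(x₁,x₂) = (x₁, (x₁+1)/x₂)`. -/
theorem stmt_2 :
    T ((x₂ ^ 4 + 1) / x₁) x₂ = T x₁ x₂ ∧ T x₁ ((x₁ + 1) / x₂) = T x₁ x₂ := by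

  have hmap : Function.Injective (algebraMap (MvPolynomial (Fin 2) ℚ) QF) :=
    IsFractionRing.injective _ _
  have h1 : x₁ ≠ 0 := by
    simp only [x₁, ne_eq, map_eq_zero_iff _ hmap]
    exact X_ne_zero 0
  have h2 : x₂ ≠ 0 := by
    simp only [x₂, ne_eq, map_eq_zero_iff _ hmap]
    exact X_ne_zero 1
  have h3 : x₂ ^ 4 + 1 ≠ 0 := by
    have : x₂ ^ 4 + 1 = algebraMap (MvPolynomial (Fin 2) ℚ) QF (X 1 ^ 4 + 1) := by
      simp [x₂]
    rw [this, ne_eq, map_eq_zero_iff _ hmap]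
    intro h
    have := congrArg (MvPolynomial.coeff 0) h
    simp [MvPolynomial.coeff_X_pow, MvPolynomial.coeff_X] at this
  have h4 : x₁ + 1 ≠ 0 := by
    have : x₁ + 1 = algebraMap (MvPolynomial (Fin 2) ℚ) QF (X 0 + 1) := by
      simp [x₁]
    rw [this, ne_eq, map_eq_zero_iff _ hmap]
    intro h
    have := congrArg (MvPolynomial.coeff 0) h
    simp [MvPolynomial.coeff_X_pow, MvPolynomial.coeff_X] at this
  constructor
  · unfold T
    rw [div_eq_div_iff (mul_ne_zero (div_ne_zero h3 h1) (pow_ne_zero 2 h2)) (mul_ne_zero h1 (pow_ne_zero 2 h2))] <;> field_simp <;> ring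
  · unfold T
    rw [div_eq_div_iff (mul_ne_zero h1 (pow_ne_zero 2 (div_ne_zero h4 h2))) (mul_ne_zero h1 (pow_ne_zero 2 h2))] <;> field_simp <;> ring
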